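/- Let P and Q be probability measures with P absolutely continuous with respect to Q, and suppose e^{−ε} ≤ dP/dQ ≤ e^{ε} holds Q-almost everywhere for some ε ≥ 0. Then the total variation distance satisfies ‖P − Q‖_TV ≤ tanh(ε/2). -/

import Mathlib

open MeasureTheory Real

lemma tanh_half_eq' (ε : ℝ) : Real.tanh (ε/2) = (Real.exp ε - 1)/(Real.exp ε + 1) := by
  rw [Real.tanh_eq_sinh_div_cosh, Real.sinh_eq, Real.cosh_eq]
  have h2 : (0:ℝ) < Real.exp (ε/2) := Real.exp_pos _
  have h3 : (0:ℝ) < Real.exp (-(ε/2)) := Real.exp_pos _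
  have h5 : (0:ℝ) < Real.exp ε + 1 := by positivity
  have h6 : Real.exp (-ε/2) * Real.exp ε = Real.exp (ε/2) := by
    rw [← Real.exp_add]; ring_nf
  field_simp
  have h7 : Real.exp (-(ε/2)) = Real.exp (-ε/2) := by ring_nf
  linear_combination (-2 * Real.exp ε) * h7 + (-2) * h6

theorem stmt_1 {X : Type*} [MeasurableSpace X] (P Q : Measure X)
    [IsProbabilityMeasure P] [IsProbabilityMeasure Q]
    (hPQ : P ≪ Q) (ε : ℝ) (hε : 0 ≤ ε)
    (hratio : ∀ᵐ x ∂Q, Real.exp (-ε) ≤ (P.rnDeriv Q x).toReal ∧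
        (P.rnDeriv Q x).toReal ≤ Real.exp ε) :
    (1 / 2) * ∫ x, |(P.rnDeriv Q x).toReal - 1| ∂Q ≤ Real.tanh (ε / 2) := by
  set f := fun x => (P.rnDeriv Q x).toReal with hf
  have hint : Integrable f Q := Measure.integrable_toReal_rnDeriv
  have hI : ∫ x, f x ∂Q = 1 := by
    rw [hf, Measure.integral_toReal_rnDeriv hPQ]; simp
  have hint2 : Integrable (fun x => |f x - 1|) Q := (hint.sub (integrable_const 1)).abs
  rcases hε.eq_or_lt with h0 | h0
  · -- ε = 0 : f = 1 a.e.
    subst h0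
    have : ∫ x, |f x - 1| ∂Q = 0 := by
      rw [integral_eq_zero_iff_of_nonneg (fun x => abs_nonneg _) hint2]
      filter_upwards [hratio] with x ⟨h1, h2⟩
      simp only [Real.exp_zero, neg_zero] at h1 h2
      have : f x = 1 := le_antisymm h2 h1
      simp [this]
    rw [this]
    simp [Real.tanh_eq_sinh_div_cosh]
  · set a := Real.exp (-ε) with ha
    set b := Real.exp ε with hb
    have hab : a * b = 1 := by rw [ha, hb, ← Real.exp_add]; simp
    have ha1 : a ≤ 1 := by rw [ha]; exact Real.exp_le_one_iff.mpr (by linarith)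
    have hb1 : 1 ≤ b := by rw [hb]; exact Real.one_le_exp hε
    have hlt : a < b := by
      rw [ha, hb]; exact Real.exp_lt_exp.mpr (by linarith)
    have hba : 0 < b - a := by linarith
    -- pointwise chord bound
    have hpt : ∀ᵐ x ∂Q, |f x - 1| ≤ ((a + b - 2) * f x + (a + b - 2 * a * b)) / (b - a) := by
      filter_upwards [hratio] with x ⟨h1, h2⟩
      rw [le_div_iff₀ hba]
      rcases le_or_gt 1 (f x) with hc | hc
      · rw [abs_of_nonneg (by linarith)]
        nlinarith [mul_nonneg (sub_nonneg.mpr ha1) (sub_nonneg.mpr h2)]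
      · rw [abs_of_neg (by linarith)]
        nlinarith [mul_nonneg (sub_nonneg.mpr hb1) (sub_nonneg.mpr h1)]
    have hintg : Integrable (fun x => ((a + b - 2) * f x + (a + b - 2 * a * b)) / (b - a)) Q := by
      apply Integrable.div_const
      exact (hint.const_mul _).add (integrable_const _)
    have hle : ∫ x, |f x - 1| ∂Q ≤ ∫ x, ((a + b - 2) * f x + (a + b - 2 * a * b)) / (b - a) ∂Q :=
      integral_mono_ae hint2 hintg hpt
    have hrhs : ∫ x, ((a + b - 2) * f x + (a + b - 2 * a * b)) / (b - a) ∂Q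
        = (2 * (a + b) - 2 - 2 * a * b) / (b - a) := by
      rw [integral_div, integral_add (hint.const_mul _) (integrable_const _),
        integral_const_mul, hI]
      simp
      ring
    rw [hrhs] at hle
    rw [tanh_half_eq']
    have hb0 : (0:ℝ) < b + 1 := by linarith
    rw [← hb]
    -- (1/2) * ∫ ≤ (1/2) * ((2(a+b)-2-2ab)/(b-a)) and the latter equals (b-1)/(b+1)
    have key : (1/2 : ℝ) * ((2 * (a + b) - 2 - 2 * a * b) / (b - a)) = (b - 1) / (b + 1) := by
      have h1 : b - a ≠ 0 := ne_of_gt hba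
      have h2 : b + 1 ≠ 0 := ne_of_gt hb0
      field_simp
      linear_combination (-(b-1)) * hab
    linarith [key ▸ (by linarith : (1/2 : ℝ) * ∫ x, |f x - 1| ∂Q ≤ (1/2) * ((2 * (a + b) - 2 - 2 * a * b) / (b - a)))]
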